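/- L^p comparison of C and A: Let 0 < q < p < ∞ and α > 0, and suppose the uncentred Hardy–Littlewood maximal operator M is of strong type (p/q, p/q), i.e. there is C₀ such that ‖M(g)‖_{L^{p/q}(X)} ≤ C₀ ‖g‖_{L^{p/q}(X)} for all measurable g. Then for all measurable functions f on X⁺, ‖C_q^α(f)‖_{L^p(X)} ≤ C₀^{1/q} ‖A_q^α(f)‖_{L^p(X)}. -/

import Mathlib

open MeasureTheory Metric Set
open scoped ENNReal NNReal

noncomputable section

variable {X : Type*}

/-- The measure `dμ(y) dt/t` on `X⁺ = X × (0,∞)`, modelled on `X × ℝ`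
(supported on `{t > 0}`). -/
def upHalf [MeasurableSpace X] (μ : Measure X) : Measure (X × ℝ) :=
  μ.prod ((volume.restrict (Set.Ioi (0:ℝ))).withDensity fun t => ENNReal.ofReal t⁻¹)

/-- The measure `dμ(y) dt` on `X⁺` (supported on `{t > 0}`). -/
def upHalf' [MeasurableSpace X] (μ : Measure X) : Measure (X × ℝ) :=
  μ.prod (volume.restrict (Set.Ioi (0:ℝ)))

/-- Cone of aperture `α` with vertex `x`. -/
def coneAt [PseudoMetricSpace X] (α : ℝ) (x : X) : Set (X × ℝ) :=
  {p | dist p.1 x < α * p.2}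

/-- Tent of aperture `α` over `O ⊆ X`: the complement in `X⁺` of the union of the
cones of aperture `α` with vertices outside `O`. -/
def tentOver [PseudoMetricSpace X] (α : ℝ) (O : Set X) : Set (X × ℝ) :=
  {p | 0 < p.2 ∧ ∀ x ∉ O, α * p.2 ≤ dist p.1 x}

/-- The `α`-shadow of `C ⊆ X⁺`: points whose cone meets `C`. -/
def shadowOf [PseudoMetricSpace X] (α : ℝ) (C : Set (X × ℝ)) : Set X :=
  {x | ∃ p ∈ C, p ∈ coneAt α x}

/-- The operator `A_q^α`:
`A_q^α(f)(x) = (∬_{Γ^α(x)} |f(y,t)|^q dμ(y)/V(y,αt) dt/t)^{1/q}`. -/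
def Afun [PseudoMetricSpace X] [MeasurableSpace X] (μ : Measure X) (q α : ℝ)
    (f : X × ℝ → ℝ) (x : X) : ℝ≥0∞ :=
  (∫⁻ p in coneAt α x,
      ENNReal.ofReal (|f p| ^ q) / μ (ball p.1 (α * p.2)) ∂upHalf μ) ^ (1/q)

/-- The truncated operator `A_q^α(·|h)`, integrating over the truncated cone
`Γ_h^α(x)`. -/
def AfunT [PseudoMetricSpace X] [MeasurableSpace X] (μ : Measure X) (q α h : ℝ)
    (f : X × ℝ → ℝ) (x : X) : ℝ≥0∞ :=
  (∫⁻ p in coneAt α x ∩ {p : X × ℝ | p.2 < h},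
      ENNReal.ofReal (|f p| ^ q) / μ (ball p.1 (α * p.2)) ∂upHalf μ) ^ (1/q)

/-- The Carleson operator `C_q^α`:
`C_q^α(f)(x) = sup_{B ∋ x} (μ(B)⁻¹ ∬_{T^α(B)} |f(y,t)|^q dμ(y) dt/t)^{1/q}`,
the supremum being over open balls containing `x`. -/
def Cfun [PseudoMetricSpace X] [MeasurableSpace X] (μ : Measure X) (q α : ℝ)
    (f : X × ℝ → ℝ) (x : X) : ℝ≥0∞ :=
  ⨆ (z : X) (ρ : ℝ) (_ : 0 < ρ ∧ x ∈ ball z ρ),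
    ((μ (ball z ρ))⁻¹ *
      ∫⁻ p in tentOver α (ball z ρ), ENNReal.ofReal (|f p| ^ q) ∂upHalf μ) ^ (1/q)

/-- The tent space quasi-norm `‖f‖_{T^{p,q,α}} = ‖A_q^α(f)‖_{L^p(X)}`. -/
def tNorm [PseudoMetricSpace X] [MeasurableSpace X] (μ : Measure X) (p q α : ℝ)
    (f : X × ℝ → ℝ) : ℝ≥0∞ :=
  (∫⁻ x, Afun μ q α f x ^ p ∂μ) ^ (1/p)

/-- The uncentred Hardy–Littlewood maximal operator applied to an
`ℝ≥0∞`-valued function. -/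
def maxFun [PseudoMetricSpace X] [MeasurableSpace X] (μ : Measure X)
    (g : X → ℝ≥0∞) (x : X) : ℝ≥0∞ :=
  ⨆ (z : X) (ρ : ℝ) (_ : 0 < ρ ∧ x ∈ ball z ρ),
    (μ (ball z ρ))⁻¹ * ∫⁻ y in ball z ρ, g y ∂μ

/-- `μ` is doubling: `V(x,2r) ≤ C V(x,r)` for all `x`, `r > 0`. -/
def DoublingMeas [PseudoMetricSpace X] [MeasurableSpace X] (μ : Measure X) : Prop :=
  ∃ C > (0:ℝ), ∀ (x : X) (r : ℝ), 0 < r →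
    μ (ball x (2 * r)) ≤ ENNReal.ofReal C * μ (ball x r)


/-! ### Auxiliary lemmas -/

section Aux

open TopologicalSpace

variable {X : Type*}

/-- A sigma-finite metric measure space in which all balls have positive measure
is separable. -/
lemma aux_sep_of_meas [MetricSpace X] [MeasurableSpace X] [BorelSpace X]
    (μ : Measure X) [SigmaFinite μ] (hpos : ∀ (x : X) (r : ℝ), 0 < r → 0 < μ (ball x r)) :
    SeparableSpace X := by
  have key : ∀ n : ℕ, ∃ S : Set X, S.Countable ∧
      ∀ x : X, ∃ a ∈ S, dist x a < 1/(n+1) := by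
    intro n
    set ε : ℝ := 1/(n+1) with hε
    have hε0 : 0 < ε := by positivity
    set P : Set (Set X) := {S | ∀ a ∈ S, ∀ b ∈ S, a ≠ b → ε ≤ dist a b} with hP
    obtain ⟨S, hSmax⟩ := zorn_subset P (by
      intro c hc hchain
      refine ⟨⋃₀ c, ?_, fun s hs => subset_sUnion_of_mem hs⟩
      rintro a ⟨s, hs, has⟩ b ⟨t, ht, hbt⟩ hab
      rcases hchain.total hs ht with h | h
      · exact hc ht a (h has) b hbt hab
      · exact hc hs a has b (h hbt) hab)
    have hSP : S ∈ P := hSmax.1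
    refine ⟨S, ?_, ?_⟩
    · have hdisj : Pairwise (Function.onFun Disjoint fun a : S => ball (a : X) (ε/2)) := by
        intro a b hab
        simp only [Function.onFun]
        apply ball_disjoint_ball
        have := hSP a a.2 b b.2 (fun h => hab (Subtype.ext h))
        linarith
      have hcnt := Measure.countable_meas_pos_of_disjoint_iUnion
        (μ := μ) (fun a : S => measurableSet_ball) hdisj
      have huniv : {i : S | 0 < μ (ball (i : X) (ε/2))} = Set.univ := by
        ext i; simp [hpos _ _ (by positivity : (0:ℝ) < ε/2)]
      rw [huniv] at hcnt
      rw [← Set.countable_coe_iff]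
      exact (countable_univ_iff (α := S)).mp hcnt
    · intro x
      by_cases hx : x ∈ S
      · exact ⟨x, hx, by simpa using hε0⟩
      by_contra hcon
      push_neg at hcon
      have hins : insert x S ∈ P := by
        intro a ha b hb hab
        rcases ha with rfl | ha
        · rcases hb with rfl | hb
          · exact absurd rfl hab
          · have := hcon b hb; linarith [this]
        · rcases hb with rfl | hb
          · have := hcon a ha; rw [dist_comm]; linarith [this]
          · exact hSP a ha b hb hab
      exact hx (hSmax.2 hins (subset_insert x S) (mem_insert x S))
  choose S hScount hSdense using key
  refine ⟨⟨⋃ n, S n, countable_iUnion hScount, ?_⟩⟩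
  rw [Metric.dense_iff]
  intro x r hr
  obtain ⟨n, hn⟩ := exists_nat_one_div_lt hr
  obtain ⟨a, haS, ha⟩ := hSdense n x
  exact ⟨a, mem_ball'.mpr (ha.trans hn), mem_iUnion.mpr ⟨n, haS⟩⟩

variable [MetricSpace X] [MeasurableSpace X] [BorelSpace X] [SecondCountableTopology X]

lemma aux_meas_ball_meas (μ : Measure X) [SigmaFinite μ] :
    Measurable fun p : X × ℝ => μ (ball p.1 p.2) := by
  have hs : MeasurableSet {w : (X × ℝ) × X | dist w.2 w.1.1 < w.1.2} := by
    apply (isOpen_lt ?_ ?_).measurableSet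
    · exact continuous_dist.comp (continuous_snd.prodMk (continuous_fst.comp continuous_fst))
    · exact continuous_snd.comp continuous_fst
  have h2 := measurable_measure_prodMk_left (ν := μ) hs
  have heq : (fun p : X × ℝ => μ (ball p.1 p.2))
      = fun p => μ (Prod.mk p ⁻¹' {w : (X × ℝ) × X | dist w.2 w.1.1 < w.1.2}) := by
    rfl
  rw [heq]; exact h2

lemma aux_meas_G (μ : Measure X) [SigmaFinite μ] (f : X × ℝ → ℝ) (hf : Measurable f)
    (q α : ℝ) (hq : 0 < q) :
    Measurable fun p : X × ℝ => ENNReal.ofReal (|f p| ^ q) / μ (ball p.1 (α * p.2)) := by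
  apply Measurable.div
  · exact ENNReal.measurable_ofReal.comp
      ((Real.continuous_rpow_const hq.le).measurable.comp hf.abs)
  · exact (aux_meas_ball_meas μ).comp
      (measurable_fst.prodMk (measurable_const.mul measurable_snd))

lemma aux_tent_meas (α : ℝ) (B : Set X) : MeasurableSet (tentOver α B) := by
  have heq : tentOver α B
      = {p : X × ℝ | 0 < p.2} ∩ ⋂ (x : X) (_ : x ∉ B), {p : X × ℝ | α * p.2 ≤ dist p.1 x} := by
    ext p; simp [tentOver, Set.mem_iInter]
  rw [heq]
  refine ((isOpen_lt continuous_const continuous_snd).measurableSet).inter ?_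
  refine IsClosed.measurableSet ?_
  refine isClosed_iInter fun x => isClosed_iInter fun _ => ?_
  exact isClosed_le (continuous_const.mul continuous_snd) (continuous_fst.dist continuous_const)

lemma aux_cone_meas (α : ℝ) (y : X) : MeasurableSet (coneAt α y) :=
  (isOpen_lt (continuous_fst.dist continuous_const)
    (continuous_const.mul continuous_snd)).measurableSet

lemma aux_ae_pos (μ : Measure X) : ∀ᵐ p ∂upHalf μ, 0 < p.2 := by
  rw [MeasureTheory.ae_iff]
  have heq : {p : X × ℝ | ¬ 0 < p.2} = Set.univ ×ˢ Set.Iic (0:ℝ) := by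
    ext p; simp [not_lt]
  rw [upHalf, heq, Measure.prod_prod]
  have hz : ((volume.restrict (Set.Ioi (0:ℝ))).withDensity fun t => ENNReal.ofReal t⁻¹)
      (Set.Iic (0:ℝ)) = 0 := by
    rw [withDensity_apply _ measurableSet_Iic, Measure.restrict_restrict measurableSet_Iic]
    have h0 : Set.Iic (0:ℝ) ∩ Set.Ioi (0:ℝ) = ∅ := by
      ext t; simp only [Set.mem_inter_iff, Set.mem_Iic, Set.mem_Ioi, Set.mem_empty_iff_false,
        iff_false, not_and, not_lt]
      intro h; exact h
    simp [h0]
  rw [hz, mul_zero]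

lemma aux_sfinite (μ : Measure X) [SigmaFinite μ] : SFinite (upHalf μ) := by
  unfold upHalf; infer_instance

/-- Afun to the power `q` is the cone integral. -/
lemma aux_Afun_pow (μ : Measure X) (q α : ℝ) (hq : 0 < q) (f : X × ℝ → ℝ) (y : X) :
    Afun μ q α f y ^ q = ∫⁻ p, (coneAt α y).indicator
      (fun p => ENNReal.ofReal (|f p| ^ q) / μ (ball p.1 (α * p.2))) p ∂upHalf μ := by
  rw [Afun, ← ENNReal.rpow_mul, one_div, inv_mul_cancel₀ hq.ne', ENNReal.rpow_one,
    lintegral_indicator (aux_cone_meas α y)]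

/-- Measurability of `Afun`. -/
lemma aux_meas_Afun (μ : Measure X) [SigmaFinite μ] (q α : ℝ) (hq : 0 < q)
    (f : X × ℝ → ℝ) (hf : Measurable f) : Measurable (Afun μ q α f) := by
  haveI : SFinite (upHalf μ) := aux_sfinite μ
  have hSC : MeasurableSet {w : X × (X × ℝ) | dist w.2.1 w.1 < α * w.2.2} := by
    apply (isOpen_lt ?_ ?_).measurableSet
    · exact continuous_dist.comp
        ((continuous_fst.comp continuous_snd).prodMk continuous_fst)
    · exact continuous_const.mul (continuous_snd.comp continuous_snd)
  have hkey : Measurable fun w : X × (X × ℝ) =>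
      Set.indicator {w : X × (X × ℝ) | dist w.2.1 w.1 < α * w.2.2}
        (fun w => ENNReal.ofReal (|f w.2| ^ q) / μ (ball w.2.1 (α * w.2.2))) w :=
    Measurable.indicator ((aux_meas_G μ f hf q α hq).comp measurable_snd) hSC
  have heq : Afun μ q α f = fun x =>
      (∫⁻ p, Set.indicator {w : X × (X × ℝ) | dist w.2.1 w.1 < α * w.2.2}
        (fun w => ENNReal.ofReal (|f w.2| ^ q) / μ (ball w.2.1 (α * w.2.2))) (x, p)
        ∂upHalf μ) ^ (1/q) := by
    funext x
    rw [Afun, ← lintegral_indicator (aux_cone_meas α x)]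
    congr 1
  rw [heq]
  exact ENNReal.continuous_rpow_const.measurable.comp (Measurable.lintegral_prod_right' hkey)

/-- Key Fubini estimate: the tent integral is bounded by the ball integral of `Afun ^ q`. -/
lemma aux_tent_le (μ : Measure X) [SigmaFinite μ]
    (hpos : ∀ (x : X) (r : ℝ), 0 < r → 0 < μ (ball x r))
    (hfin : ∀ (x : X) (r : ℝ), 0 < r → μ (ball x r) < ∞)
    (q α : ℝ) (hq : 0 < q) (hα : 0 < α) (f : X × ℝ → ℝ) (hf : Measurable f)
    (B : Set X) (hB : MeasurableSet B) :
    ∫⁻ p in tentOver α B, ENNReal.ofReal (|f p| ^ q) ∂upHalf μ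
      ≤ ∫⁻ y in B, Afun μ q α f y ^ q ∂μ := by
  haveI : SFinite (upHalf μ) := aux_sfinite μ
  set G : X × ℝ → ℝ≥0∞ :=
    fun p => ENNReal.ofReal (|f p| ^ q) / μ (ball p.1 (α * p.2)) with hG
  have hGm : Measurable G := aux_meas_G μ f hf q α hq
  have swap : ∫⁻ y in B, Afun μ q α f y ^ q ∂μ
      = ∫⁻ p, G p * μ (ball p.1 (α * p.2) ∩ B) ∂upHalf μ := by
    have h0 : ∀ y : X, Afun μ q α f y ^ q = ∫⁻ p, (coneAt α y).indicator G p ∂upHalf μ :=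
      fun y => aux_Afun_pow μ q α hq f y
    simp only [h0]
    rw [lintegral_lintegral_swap]
    · refine lintegral_congr fun p => ?_
      have h1 : ∀ y : X, (coneAt α y).indicator G p
          = (ball p.1 (α * p.2)).indicator (fun _ => G p) y := by
        intro y
        have hmem : p ∈ coneAt α y ↔ y ∈ ball p.1 (α * p.2) := by
          simp [coneAt, Metric.mem_ball, dist_comm]
        by_cases h : p ∈ coneAt α y
        · rw [Set.indicator_of_mem h, Set.indicator_of_mem (hmem.mp h)]
        · rw [Set.indicator_of_notMem h,
            Set.indicator_of_notMem (fun hc => h (hmem.mpr hc))]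
      simp only [h1]
      rw [lintegral_indicator measurableSet_ball, setLIntegral_const,
        Measure.restrict_apply measurableSet_ball]
    · apply Measurable.aemeasurable
      have hSC : MeasurableSet {w : X × (X × ℝ) | dist w.2.1 w.1 < α * w.2.2} := by
        apply (isOpen_lt ?_ ?_).measurableSet
        · exact continuous_dist.comp
            ((continuous_fst.comp continuous_snd).prodMk continuous_fst)
        · exact continuous_const.mul (continuous_snd.comp continuous_snd)
      exact Measurable.indicator (hGm.comp measurable_snd) hSC
  rw [swap, ← lintegral_indicator (aux_tent_meas α B)]
  refine lintegral_mono_ae ?_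
  filter_upwards [aux_ae_pos μ] with p hp
  by_cases hpT : p ∈ tentOver α B
  · rw [Set.indicator_of_mem hpT]
    have hsub : ball p.1 (α * p.2) ∩ B = ball p.1 (α * p.2) := by
      refine Set.inter_eq_left.mpr fun z hz => ?_
      by_contra hzB
      have h1 := hpT.2 z hzB
      rw [Metric.mem_ball, dist_comm] at hz
      linarith
    rw [hsub, hG]
    have h1 : μ (ball p.1 (α * p.2)) ≠ 0 := (hpos _ _ (mul_pos hα hp)).ne'
    have h2 : μ (ball p.1 (α * p.2)) ≠ ⊤ := (hfin _ _ (mul_pos hα hp)).ne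
    exact le_of_eq (ENNReal.div_mul_cancel h1 h2).symm
  · rw [Set.indicator_of_notMem hpT]
    exact zero_le

/-- The pointwise bound `Cfun ≤ (maxFun (Afun ^ q)) ^ (1/q)`. -/
lemma aux_cfun_le (μ : Measure X) [SigmaFinite μ]
    (hpos : ∀ (x : X) (r : ℝ), 0 < r → 0 < μ (ball x r))
    (hfin : ∀ (x : X) (r : ℝ), 0 < r → μ (ball x r) < ∞)
    (q α : ℝ) (hq : 0 < q) (hα : 0 < α) (f : X × ℝ → ℝ) (hf : Measurable f) (x : X) :
    Cfun μ q α f x ≤ (maxFun μ (fun y => Afun μ q α f y ^ q) x) ^ (1/q) := by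
  rw [Cfun]
  refine iSup_le fun z => iSup_le fun ρ => iSup_le fun hzρ => ?_
  refine ENNReal.rpow_le_rpow ?_ (one_div_nonneg.mpr hq.le)
  refine le_trans (mul_le_mul_right
    (aux_tent_le μ hpos hfin q α hq hα f hf (ball z ρ) measurableSet_ball) _) ?_
  rw [maxFun]
  exact le_iSup_of_le z (le_iSup_of_le ρ (le_iSup_of_le hzρ le_rfl))

end Aux

/-- **`L^p` comparison of `C` and `A`.** Let `0 < q < p < ∞`, `α > 0`, and
suppose the uncentred Hardy–Littlewood maximal operator is of strong type
`(p/q, p/q)` with constant `C₀`. Then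
`‖C_q^α(f)‖_{L^p(X)} ≤ C₀^{1/q} ‖A_q^α(f)‖_{L^p(X)}` for all measurable `f`. -/
theorem carleson_Lp_bound [MetricSpace X] [MeasurableSpace X] [BorelSpace X]
    (μ : Measure X) [SigmaFinite μ]
    (hpos : ∀ (x : X) (r : ℝ), 0 < r → 0 < μ (ball x r))
    (hfin : ∀ (x : X) (r : ℝ), 0 < r → μ (ball x r) < ∞)
    (p q α : ℝ) (hq : 0 < q) (hqp : q < p) (hα : 0 < α) (C₀ : ℝ)
    (hmax : ∀ g : X → ℝ, Measurable g →
      (∫⁻ x, maxFun μ (fun y => ENNReal.ofReal |g y|) x ^ (p/q) ∂μ) ^ (q/p)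
        ≤ ENNReal.ofReal C₀ * (∫⁻ x, ENNReal.ofReal |g x| ^ (p/q) ∂μ) ^ (q/p))
    (f : X × ℝ → ℝ) (hf : Measurable f) :
    (∫⁻ x, Cfun μ q α f x ^ p ∂μ) ^ (1/p)
      ≤ ENNReal.ofReal C₀ ^ (1/q) * (∫⁻ x, Afun μ q α f x ^ p ∂μ) ^ (1/p) := by
  
  have hp0 : (0:ℝ) < p := hq.trans hqp
  have hq' : q ≠ 0 := hq.ne'
  have hp' : p ≠ 0 := hp0.ne'
  haveI : TopologicalSpace.SeparableSpace X := aux_sep_of_meas μ hpos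
  haveI : SecondCountableTopology X := UniformSpace.secondCountable_of_separable X
  set A := Afun μ q α f with hAdef
  have hA : Measurable A := aux_meas_Afun μ q α hq f hf
  -- pointwise bound
  have hCM : ∀ x, Cfun μ q α f x ^ p ≤ maxFun μ (fun y => A y ^ q) x ^ (p/q) := by
    intro x
    calc Cfun μ q α f x ^ p
        ≤ ((maxFun μ (fun y => A y ^ q) x) ^ (1/q)) ^ p :=
          ENNReal.rpow_le_rpow (aux_cfun_le μ hpos hfin q α hq hα f hf x) hp0.le
      _ = maxFun μ (fun y => A y ^ q) x ^ (p/q) := by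
          rw [← ENNReal.rpow_mul, show (1/q) * p = p/q by ring]
  have hI1 : ∫⁻ x, Cfun μ q α f x ^ p ∂μ
      ≤ ∫⁻ x, maxFun μ (fun y => A y ^ q) x ^ (p/q) ∂μ := lintegral_mono hCM
  rcases eq_or_ne (∫⁻ x, A x ^ p ∂μ) ⊤ with hIA | hIA
  · -- infinite case
    rw [hIA]
    rcases isEmpty_or_nonempty X with hX | hX
    · exfalso
      have : (μ : Measure X) = 0 := μ.eq_zero_of_isEmpty
      rw [this] at hIA
      simp at hIA
    · obtain ⟨x₀⟩ := hX
      set B₀ := ball x₀ 1 with hB₀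
      have hB0 : 0 < μ B₀ := hpos x₀ 1 one_pos
      have hB0' : μ B₀ < ⊤ := hfin x₀ 1 one_pos
      set g : X → ℝ := B₀.indicator fun _ => (1:ℝ) with hgdef
      have hg : Measurable g := measurable_const.indicator measurableSet_ball
      have hgval : ∀ x, ENNReal.ofReal |g x| = B₀.indicator (fun _ => (1:ℝ≥0∞)) x := by
        intro x
        by_cases h : x ∈ B₀
        · rw [Set.indicator_of_mem h]
          rw [hgdef]
          simp [Set.indicator_of_mem h]
        · rw [Set.indicator_of_notMem h]
          rw [hgdef]
          simp [Set.indicator_of_notMem h]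
      have hrhs : ∫⁻ x, ENNReal.ofReal |g x| ^ (p/q) ∂μ = μ B₀ := by
        have : ∀ x, ENNReal.ofReal |g x| ^ (p/q)
            = B₀.indicator (fun _ => (1:ℝ≥0∞)) x := by
          intro x
          rw [hgval]
          by_cases h : x ∈ B₀
          · simp [Set.indicator_of_mem h]
          · simp [Set.indicator_of_notMem h,
              ENNReal.zero_rpow_of_pos (div_pos hp0 hq)]
        simp only [this]
        rw [lintegral_indicator measurableSet_ball, setLIntegral_one]
      have hpt : ∀ x ∈ B₀, (1:ℝ≥0∞) ≤ maxFun μ (fun y => ENNReal.ofReal |g y|) x := by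
        intro x hx
        have hint : ∫⁻ y in B₀, ENNReal.ofReal |g y| ∂μ = μ B₀ := by
          simp only [hgval]
          rw [lintegral_indicator measurableSet_ball, setLIntegral_one,
            Measure.restrict_apply measurableSet_ball, Set.inter_self]
        have hone : (μ B₀)⁻¹ * ∫⁻ y in B₀, ENNReal.ofReal |g y| ∂μ = 1 := by
          rw [hint, ENNReal.inv_mul_cancel hB0.ne' hB0'.ne]
        rw [maxFun, ← hone]
        exact le_iSup_of_le x₀ (le_iSup_of_le 1 (le_iSup_of_le ⟨one_pos, hx⟩ le_rfl))
      have hlhs : μ B₀ ≤ ∫⁻ x, maxFun μ (fun y => ENNReal.ofReal |g y|) x ^ (p/q) ∂μ := by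
        calc μ B₀ = ∫⁻ _ in B₀, 1 ∂μ := (setLIntegral_one _).symm
          _ ≤ ∫⁻ x in B₀, maxFun μ (fun y => ENNReal.ofReal |g y|) x ^ (p/q) ∂μ := by
              refine lintegral_mono_ae ?_
              filter_upwards [ae_restrict_mem measurableSet_ball] with x hx
              calc (1:ℝ≥0∞) = 1 ^ (p/q) := (ENNReal.one_rpow _).symm
                _ ≤ maxFun μ (fun y => ENNReal.ofReal |g y|) x ^ (p/q) :=
                    ENNReal.rpow_le_rpow (hpt x hx) (div_pos hp0 hq).le
          _ ≤ ∫⁻ x, maxFun μ (fun y => ENNReal.ofReal |g y|) x ^ (p/q) ∂μ :=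
              setLIntegral_le_lintegral _ _
      have h1C : (1:ℝ≥0∞) ≤ ENNReal.ofReal C₀ := by
        have hm := hmax g hg
        rw [hrhs] at hm
        have hkey : (μ B₀) ^ (q/p) ≤ ENNReal.ofReal C₀ * μ B₀ ^ (q/p) :=
          le_trans (ENNReal.rpow_le_rpow hlhs (div_pos hq hp0).le) hm
        have hBQ0 : μ B₀ ^ (q/p) ≠ 0 := (ENNReal.rpow_pos hB0 hB0'.ne).ne'
        have hBQt : μ B₀ ^ (q/p) ≠ ⊤ :=
          ENNReal.rpow_ne_top_of_nonneg (div_pos hq hp0).le hB0'.ne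
        calc (1:ℝ≥0∞) = μ B₀ ^ (q/p) * (μ B₀ ^ (q/p))⁻¹ :=
              (ENNReal.mul_inv_cancel hBQ0 hBQt).symm
          _ ≤ (ENNReal.ofReal C₀ * μ B₀ ^ (q/p)) * (μ B₀ ^ (q/p))⁻¹ :=
              mul_le_mul_left hkey _
          _ = ENNReal.ofReal C₀ := by
              rw [mul_assoc, ENNReal.mul_inv_cancel hBQ0 hBQt, mul_one]
      rw [ENNReal.top_rpow_of_pos (one_div_pos.mpr hp0), ENNReal.mul_top
        (ENNReal.rpow_pos (lt_of_lt_of_le zero_lt_one h1C) ENNReal.ofReal_ne_top).ne']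
      exact le_top
  · -- finite case
    have hAae : ∀ᵐ x ∂μ, A x ≠ ⊤ := by
      have h1 : ∀ᵐ x ∂μ, A x ^ p < ⊤ :=
        ae_lt_top (ENNReal.continuous_rpow_const.measurable.comp hA) hIA
      filter_upwards [h1] with x hx
      exact ((ENNReal.rpow_lt_top_iff_of_pos hp0).mp hx).ne
    set g : X → ℝ := fun x => (A x ^ q).toReal with hgdef
    have hg : Measurable g :=
      ENNReal.measurable_toReal.comp (ENNReal.continuous_rpow_const.measurable.comp hA)
    have hgae : ∀ᵐ x ∂μ, ENNReal.ofReal |g x| = A x ^ q := by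
      filter_upwards [hAae] with x hx
      have hne : A x ^ q ≠ ⊤ := ENNReal.rpow_ne_top_of_nonneg hq.le hx
      rw [hgdef]
      simp only []
      rw [abs_of_nonneg ENNReal.toReal_nonneg, ENNReal.ofReal_toReal hne]
    have hmaxeq : ∀ x, maxFun μ (fun y => ENNReal.ofReal |g y|) x
        = maxFun μ (fun y => A y ^ q) x := by
      intro x
      rw [maxFun, maxFun]
      refine iSup_congr fun z => iSup_congr fun ρ => iSup_congr fun h => ?_
      congr 1
      exact lintegral_congr_ae (ae_restrict_of_ae hgae)
    have h2 : ∫⁻ x, ENNReal.ofReal |g x| ^ (p/q) ∂μ = ∫⁻ x, A x ^ p ∂μ := by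
      refine lintegral_congr_ae ?_
      filter_upwards [hgae] with x hx
      rw [hx, ← ENNReal.rpow_mul, show q * (p/q) = p by field_simp]
    have hm := hmax g hg
    rw [h2] at hm
    simp only [hmaxeq] at hm
    have h1q : (0:ℝ) ≤ 1/q := (one_div_pos.mpr hq).le
    have hqp' : (0:ℝ) ≤ q/p := (div_pos hq hp0).le
    calc (∫⁻ x, Cfun μ q α f x ^ p ∂μ) ^ (1/p)
        = ((∫⁻ x, Cfun μ q α f x ^ p ∂μ) ^ (q/p)) ^ (1/q) := by
          rw [← ENNReal.rpow_mul, show (q/p) * (1/q) = 1/p by field_simp]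
      _ ≤ ((∫⁻ x, maxFun μ (fun y => A y ^ q) x ^ (p/q) ∂μ) ^ (q/p)) ^ (1/q) :=
          ENNReal.rpow_le_rpow (ENNReal.rpow_le_rpow hI1 hqp') h1q
      _ ≤ (ENNReal.ofReal C₀ * (∫⁻ x, A x ^ p ∂μ) ^ (q/p)) ^ (1/q) :=
          ENNReal.rpow_le_rpow hm h1q
      _ = ENNReal.ofReal C₀ ^ (1/q) * ((∫⁻ x, A x ^ p ∂μ) ^ (q/p)) ^ (1/q) :=
          ENNReal.mul_rpow_of_nonneg _ _ h1q
      _ = ENNReal.ofReal C₀ ^ (1/q) * (∫⁻ x, A x ^ p ∂μ) ^ (1/p) := by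
          rw [← ENNReal.rpow_mul, show (q/p) * (1/q) = 1/p by field_simp]
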